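/- Let (M_p)_p and (N_p)_p be sequences of positive reals with M_0 = N_0 = 1, with associated functions M and N. Define Q_p = min_{0 ≤ q ≤ p} M_q N_{p−q}. Then the associated function Q of (Q_p)_p satisfies Q(t) = M(t) + N(t) for all t > 0. -/
import Mathlib


/-- The associated function `L(t) = sup_p log(t^p / L_p)` of a weight sequence,
with values in the extended reals. -/
noncomputable def assocFn (L : ℕ → ℝ) (t : ℝ) : EReal :=
  ⨆ p : ℕ, ((Real.log (t ^ p / L p) : ℝ) : EReal)

/-- For `Q_p = min_{0 ≤ q ≤ p} M_q N_{p−q}`, the associated function of `(Q_p)`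
is `Q(t) = M(t) + N(t)` for all `t > 0`. -/
theorem assocFn_min_conv (M N : ℕ → ℝ)
    (hMpos : ∀ p, 0 < M p) (hNpos : ∀ p, 0 < N p)
    (hM0 : M 0 = 1) (hN0 : N 0 = 1) :
    ∀ t : ℝ, 0 < t →
      assocFn (fun p => ⨅ q : Fin (p + 1), M q * N (p - q)) t
        = assocFn M t + assocFn N t := by
  intro t ht
  set Q : ℕ → ℝ := fun p => ⨅ q : Fin (p + 1), M q * N (p - q) with hQ
  have hQle : ∀ p (q : Fin (p + 1)), Q p ≤ M q * N (p - q) := by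
    intro p q
    exact ciInf_le (Finite.bddBelow_range _) q
  have hQattain : ∀ p, ∃ q : Fin (p + 1), Q p = M q * N (p - q) := by
    intro p
    obtain ⟨q, hq⟩ := Finite.exists_min (fun q : Fin (p + 1) => M q * N (p - q))
    exact ⟨q, le_antisymm (hQle p q) (le_ciInf hq)⟩
  have hQpos : ∀ p, 0 < Q p := by
    intro p
    obtain ⟨q, hq⟩ := hQattain p
    rw [hq]; exact mul_pos (hMpos q) (hNpos _)
  -- key: log (t^(q+r) / (M q * N r)) = log (t^q / M q) + log (t^r / N r)
  have key : ∀ q r : ℕ, Real.log (t ^ (q + r) / (M q * N r))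
      = Real.log (t ^ q / M q) + Real.log (t ^ r / N r) := by
    intro q r
    rw [pow_add, mul_div_mul_comm, Real.log_mul
      (div_pos (pow_pos ht q) (hMpos q)).ne'
      (div_pos (pow_pos ht r) (hNpos r)).ne']
  apply le_antisymm
  · apply iSup_le
    intro p
    obtain ⟨q, hq⟩ := hQattain p
    have hqp : (q : ℕ) ≤ p := Nat.lt_succ_iff.mp q.isLt
    have hp : (q : ℕ) + (p - (q : ℕ)) = p := Nat.add_sub_cancel' hqp
    have : Real.log (t ^ p / Q p)
        = Real.log (t ^ (q : ℕ) / M q) + Real.log (t ^ (p - (q : ℕ)) / N (p - q)) := by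
      rw [hq, ← key, hp]
    rw [this, EReal.coe_add]
    exact add_le_add (le_iSup (fun p => ((Real.log (t ^ p / M p) : ℝ) : EReal)) (q : ℕ))
      (le_iSup (fun p => ((Real.log (t ^ p / N p) : ℝ) : EReal)) (p - (q : ℕ)))
  · apply EReal.add_le_of_forall_lt
    intro a ha b hb
    rw [assocFn, lt_iSup_iff] at ha hb
    obtain ⟨q, hq⟩ := ha
    obtain ⟨r, hr⟩ := hb
    have h1 : Q (q + r) ≤ M q * N r := by
      have := hQle (q + r) ⟨q, by omega⟩
      simpa using this
    have h2 : Real.log (t ^ q / M q) + Real.log (t ^ r / N r)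
        ≤ Real.log (t ^ (q + r) / Q (q + r)) := by
      rw [← key]
      apply Real.log_le_log (div_pos (pow_pos ht _) (mul_pos (hMpos q) (hNpos r)))
      exact div_le_div_of_nonneg_left (le_of_lt (pow_pos ht _)) (hQpos _) h1
    calc a + b ≤ ((Real.log (t ^ q / M q) : ℝ) : EReal)
        + ((Real.log (t ^ r / N r) : ℝ) : EReal) := add_le_add hq.le hr.le
      _ = ((Real.log (t ^ q / M q) + Real.log (t ^ r / N r) : ℝ) : EReal) :=
          (EReal.coe_add _ _).symm
      _ ≤ ((Real.log (t ^ (q + r) / Q (q + r)) : ℝ) : EReal) := EReal.coe_le_coe_iff.mpr h2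
      _ ≤ _ := le_iSup (fun p => ((Real.log (t ^ p / Q p) : ℝ) : EReal)) (q + r)
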